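/- If (u, λ) is a C^2 solution of -u'' + a x u = λ u on [-1,1], then [x^2(u'(x)^2 + (λ - a x)u(x)^2) - 2x u(x) u'(x) + u(x)^2] evaluated from -1 to 1 equals 4λ ∫_{-1}^1 x u^2 dx - 5a ∫_{-1}^1 x^2 u^2 dx. -/

import Mathlib

open Set intervalIntegral

theorem pohozaev_identity_two
    (a lam : ℝ) (u u' u'' : ℝ → ℝ)
    (hd1 : ∀ x ∈ Icc (-1:ℝ) 1, HasDerivWithinAt u (u' x) (Icc (-1:ℝ) 1) x)
    (hd2 : ∀ x ∈ Icc (-1:ℝ) 1, HasDerivWithinAt u' (u'' x) (Icc (-1:ℝ) 1) x)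
    (hu''c : ContinuousOn u'' (Icc (-1:ℝ) 1))
    (heq : ∀ x ∈ Icc (-1:ℝ) 1, -u'' x + a * x * u x = lam * u x) :
    ((1:ℝ) ^ 2 * (u' 1 ^ 2 + (lam - a * 1) * u 1 ^ 2) - 2 * 1 * u 1 * u' 1 + u 1 ^ 2)
      - ((-1:ℝ) ^ 2 * (u' (-1) ^ 2 + (lam - a * (-1)) * u (-1) ^ 2)
          - 2 * (-1) * u (-1) * u' (-1) + u (-1) ^ 2)
      = 4 * lam * (∫ x in (-1:ℝ)..1, x * (u x) ^ 2)
        - 5 * a * (∫ x in (-1:ℝ)..1, x ^ 2 * (u x) ^ 2) := by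
  set F : ℝ → ℝ := fun x =>
    x ^ 2 * (u' x ^ 2 + (lam - a * x) * u x ^ 2) - 2 * x * u x * u' x + u x ^ 2 with hF
  set g : ℝ → ℝ := fun x => 4 * lam * (x * u x ^ 2) - 5 * a * (x ^ 2 * u x ^ 2) with hg
  have huc : ContinuousOn u (Icc (-1:ℝ) 1) := fun x hx => (hd1 x hx).continuousWithinAt
  have hu'c : ContinuousOn u' (Icc (-1:ℝ) 1) := fun x hx => (hd2 x hx).continuousWithinAt
  have hgc : ContinuousOn g (Icc (-1:ℝ) 1) := by
    apply ContinuousOn.sub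
    · exact (continuousOn_const.mul (continuousOn_id.mul (huc.pow 2)))
    · exact continuousOn_const.mul (((continuousOn_id.pow 2)).mul (huc.pow 2))
  have hFc : ContinuousOn F (Icc (-1:ℝ) 1) := by
    apply ContinuousOn.add
    apply ContinuousOn.sub
    · exact (continuousOn_id.pow 2).mul
        ((hu'c.pow 2).add ((continuousOn_const.sub (continuousOn_const.mul continuousOn_id)).mul
          (huc.pow 2)))
    · exact ((continuousOn_const.mul continuousOn_id).mul huc).mul hu'c
    · exact huc.pow 2
  have hderiv : ∀ x ∈ Ioo (-1:ℝ) 1, HasDerivAt F (g x) x := by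
    intro x hx
    have hxI : x ∈ Icc (-1:ℝ) 1 := Ioo_subset_Icc_self hx
    have hnhds : Icc (-1:ℝ) 1 ∈ nhds x := Icc_mem_nhds hx.1 hx.2
    have hu : HasDerivAt u (u' x) x := (hd1 x hxI).hasDerivAt hnhds
    have hu' : HasDerivAt u' (u'' x) x := (hd2 x hxI).hasDerivAt hnhds
    have hid : HasDerivAt (fun x : ℝ => x) 1 x := hasDerivAt_id x
    have h1 := (hid.pow 2).mul ((hu'.pow 2).add
      (((hasDerivAt_const x lam).sub ((hasDerivAt_const x a).mul hid)).mul (hu.pow 2)))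
    have h2 := (((hasDerivAt_const x 2).mul hid).mul hu).mul hu'
    have h := (h1.sub h2).add (hu.pow 2)
    have hu'' : u'' x = a * x * u x - lam * u x := by linarith [heq x hxI]
    convert h using 1
    · rfl
    · rfl
    · rfl
    simp only [hg, hu'', Pi.add_apply, Pi.sub_apply, Pi.mul_apply, Pi.pow_apply]
    norm_num
    ring
  have hint : ∀ c : ℝ, ∀ p : ℕ, IntervalIntegrable (fun x => c * (x ^ p * u x ^ 2))
      MeasureTheory.volume (-1:ℝ) 1 := by
    intro c p
    apply ContinuousOn.intervalIntegrable
    rw [uIcc_of_le (by norm_num)]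
    exact continuousOn_const.mul ((continuousOn_id.pow p).mul (huc.pow 2))
  have hint1 := hint (4 * lam) 1
  have hint2 := hint (5 * a) 2
  simp only [pow_one] at hint1
  have hftc : ∫ x in (-1:ℝ)..1, g x = F 1 - F (-1) := by
    apply intervalIntegral.integral_eq_sub_of_hasDeriv_right_of_le (by norm_num) hFc
    · intro x hx
      exact (hderiv x hx).hasDerivWithinAt
    · apply ContinuousOn.intervalIntegrable
      rw [uIcc_of_le (by norm_num)]
      exact hgc
  have hsplit : ∫ x in (-1:ℝ)..1, g x
      = 4 * lam * (∫ x in (-1:ℝ)..1, x * (u x) ^ 2)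
        - 5 * a * (∫ x in (-1:ℝ)..1, x ^ 2 * (u x) ^ 2) := by
    rw [hg]
    rw [intervalIntegral.integral_sub hint1 hint2,
      intervalIntegral.integral_const_mul, intervalIntegral.integral_const_mul]
  rw [← hsplit, hftc]
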